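/- Let ν ∈ Z^{p+q} with ν_1 ≥ ... ≥ ν_{p+q}, and let t = (t^{(p)}, t^{(q)}) ∈ R^p × R^q. If t lies in the convex hull of the S_{p+q}-orbit of ν, and ν^{(p)} := (ν_1,...,ν_p) lies in the convex hull of the S_p-orbit of t^{(p)} and ν^{(q)} := (ν_{p+1},...,ν_{p+q}) lies in the convex hull of the S_q-orbit of t^{(q)}, then t^{(p)} is a permutation of ν^{(p)} and t^{(q)} is a permutation of ν^{(q)}. -/

import Mathlib

open Equiv Finset


lemma strictMono_fin_le {k n : ℕ} {f : Fin k → Fin n} (hf : StrictMono f) :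
    ∀ j : Fin k, (j : ℕ) ≤ (f j : ℕ) := by
  have H : ∀ m, ∀ h : m < k, m ≤ ((f ⟨m, h⟩ : Fin n) : ℕ) := by
    intro m
    induction m with
    | zero => intro h; exact Nat.zero_le _
    | succ m ih =>
      intro h
      have hm : m < k := Nat.lt_of_succ_lt h
      have h2 : f ⟨m, hm⟩ < f ⟨m + 1, h⟩ := hf (by simp [Fin.lt_def])
      have h3 := Fin.lt_def.mp h2
      have h4 := ih hm
      omega
  intro j; simpa using H j j.isLt

lemma sum_le_sum_first {n k : ℕ} (hk : k ≤ n) (v : Fin n → ℝ) (hv : Antitone v)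
    (S : Finset (Fin n)) (hS : S.card = k) :
    ∑ i ∈ S, v i ≤ ∑ j : Fin k, v (Fin.castLE hk j) := by
  have hmap : Finset.univ.map (S.orderEmbOfFin hS).toEmbedding = S := by
    apply Finset.eq_of_subset_of_card_le
    · intro x hx
      simp only [Finset.mem_map] at hx
      obtain ⟨j, _, rfl⟩ := hx
      exact S.orderEmbOfFin_mem hS j
    · simp [hS]
  calc ∑ i ∈ S, v i = ∑ j : Fin k, v (S.orderEmbOfFin hS j) := by
        conv_lhs => rw [← hmap]
        rw [Finset.sum_map]
        rfl
    _ ≤ ∑ j : Fin k, v (Fin.castLE hk j) := by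
        apply Finset.sum_le_sum
        intro j _
        apply hv
        rw [Fin.le_def]
        simpa using strictMono_fin_le (S.orderEmbOfFin hS).strictMono j

lemma hull_sum_le {n : ℕ} {v x : Fin n → ℝ}
    (hx : x ∈ convexHull ℝ (Set.range fun σ : Perm (Fin n) => fun k => v (σ k)))
    (S : Finset (Fin n)) (c : ℝ) (h : ∀ σ : Perm (Fin n), ∑ i ∈ S, v (σ i) ≤ c) :
    ∑ i ∈ S, x i ≤ c := by
  have hlin : IsLinearMap ℝ (fun y : Fin n → ℝ => ∑ i ∈ S, y i) :=
    ⟨fun a b => Finset.sum_add_distrib, fun r a => by simp [Finset.mul_sum]⟩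
  have hconv : Convex ℝ {y : Fin n → ℝ | ∑ i ∈ S, y i ≤ c} := convex_halfSpace_le hlin c
  refine convexHull_min ?_ hconv hx
  rintro _ ⟨σ, rfl⟩
  exact h σ

lemma main_p (p q : ℕ) (ν : Fin (p + q) → ℝ) (hν : Antitone ν) (t : Fin (p + q) → ℝ)
    (ht : t ∈ convexHull ℝ
      (Set.range fun σ : Perm (Fin (p + q)) => fun k => ν (σ k)))
    (htp : (fun i : Fin p => ν (Fin.castAdd q i)) ∈ convexHull ℝ
      (Set.range fun σ : Perm (Fin p) => fun i => t (Fin.castAdd q (σ i)))) :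
    ∃ σ : Perm (Fin p), ∀ i : Fin p, t (Fin.castAdd q i) = ν (Fin.castAdd q (σ i)) := by
  classical
  set T : Fin p → ℝ := fun i => t (Fin.castAdd q i) with hT
  set A : Fin p → ℝ := fun i => ν (Fin.castAdd q i) with hA
  have hAanti : Antitone A := by
    intro i j hij
    apply hν
    rw [Fin.le_def]
    simpa using Fin.le_def.mp hij
  -- sorting permutation for T, descending
  set π : Perm (Fin p) := Tuple.sort (fun i => -T i) with hπ
  set D : Fin p → ℝ := fun i => T (π i) with hD
  have hDanti : Antitone D := by
    have hmono := Tuple.monotone_sort (fun i => -T i)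
    intro i j hij
    have := hmono hij
    simp only [Function.comp] at this
    simpa [hD] using neg_le_neg_iff.mp (by simpa using this)
  -- the "first k" finset in Fin m
  -- key inequality 1 : from htp
  have key1 : ∀ k (hk : k ≤ p),
      ∑ j : Fin k, A (Fin.castLE hk j) ≤ ∑ j : Fin k, D (Fin.castLE hk j) := by
    intro k hk
    have hSk : (Finset.univ.map (Fin.castLEEmb hk)).card = k := by simp
    have := hull_sum_le (v := T) (x := A) htp
      (Finset.univ.map (Fin.castLEEmb hk))
      (∑ j : Fin k, D (Fin.castLE hk j)) ?_
    · simpa [Finset.sum_map] using this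
    · intro σ
      have hinj : Function.Injective (fun i => π⁻¹ (σ i)) := fun a b h => by
        simpa using h
      have h1 : ∑ i ∈ Finset.univ.map (Fin.castLEEmb hk), T (σ i)
          = ∑ i ∈ (Finset.univ.map (Fin.castLEEmb hk)).image
              (fun i => π⁻¹ (σ i)), D i := by
        rw [Finset.sum_image (fun a _ b _ h => hinj h)]
        apply Finset.sum_congr rfl
        intro i _
        simp [hD]
      rw [h1]
      apply sum_le_sum_first hk D hDanti
      rw [Finset.card_image_of_injective _ hinj, hSk]
  -- key inequality 2 : from ht
  have key2 : ∀ k (hk : k ≤ p),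
      ∑ j : Fin k, D (Fin.castLE hk j) ≤ ∑ j : Fin k, A (Fin.castLE hk j) := by
    intro k hk
    have hk' : k ≤ p + q := le_trans hk (Nat.le_add_right p q)
    have hinj : Function.Injective π := π.injective
    set S : Finset (Fin (p + q)) :=
      (((Finset.univ : Finset (Fin k)).map (Fin.castLEEmb hk)).image
        (fun i => π i)).map (Fin.castAddEmb q) with hS
    have hScard : S.card = k := by
      rw [hS, Finset.card_map, Finset.card_image_of_injective _ hinj]
      simp
    have hmain := hull_sum_le (v := ν) (x := t) ht S
      (∑ j : Fin k, A (Fin.castLE hk j)) ?_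
    · have hLHS : ∑ i ∈ S, t i = ∑ j : Fin k, D (Fin.castLE hk j) := by
        rw [hS, Finset.sum_map,
          Finset.sum_image (fun a _ b _ h => hinj h), Finset.sum_map]
        rfl
      rw [hLHS] at hmain
      exact hmain
    · intro σ
      have hσinj : Function.Injective σ := σ.injective
      have h1 : ∑ i ∈ S, ν (σ i) = ∑ i ∈ S.image σ, ν i :=
        (Finset.sum_image (fun a _ b _ h => hσinj h)).symm
      rw [h1]
      have h2 := sum_le_sum_first hk' ν hν (S.image σ)
        (by rw [Finset.card_image_of_injective _ hσinj, hScard])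
      refine le_trans h2 (le_of_eq ?_)
      apply Finset.sum_congr rfl
      intro j _
      rfl
  have keyEq : ∀ k (hk : k ≤ p),
      ∑ j : Fin k, D (Fin.castLE hk j) = ∑ j : Fin k, A (Fin.castLE hk j) :=
    fun k hk => le_antisymm (key2 k hk) (key1 k hk)
  -- termwise equality
  have hterm : ∀ i : Fin p, D i = A i := by
    intro i
    have hi1 : (i : ℕ) + 1 ≤ p := i.isLt
    have hi0 : (i : ℕ) ≤ p := le_of_lt i.isLt
    have e1 := keyEq ((i : ℕ) + 1) hi1
    have e0 := keyEq (i : ℕ) hi0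
    have split : ∀ f : Fin p → ℝ,
        ∑ j : Fin ((i : ℕ) + 1), f (Fin.castLE hi1 j)
          = (∑ j : Fin (i : ℕ), f (Fin.castLE hi0 j)) + f i := by
      intro f
      rw [Fin.sum_univ_castSucc]
      rfl
    rw [split D, split A, e0] at e1
    linarith
  refine ⟨π⁻¹, fun i => ?_⟩
  have := hterm (π⁻¹ i)
  simp only [hD] at this
  rw [show π (π⁻¹ i) = i from π.apply_symm_apply i] at this
  exact this

lemma main_q (p q : ℕ) (ν : Fin (p + q) → ℝ) (hν : Antitone ν) (t : Fin (p + q) → ℝ)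
    (ht : t ∈ convexHull ℝ
      (Set.range fun σ : Perm (Fin (p + q)) => fun k => ν (σ k)))
    (htq : (fun j : Fin q => ν (Fin.natAdd p j)) ∈ convexHull ℝ
      (Set.range fun σ : Perm (Fin q) => fun j => t (Fin.natAdd p (σ j)))) :
    ∃ τ : Perm (Fin q), ∀ j : Fin q, t (Fin.natAdd p j) = ν (Fin.natAdd p (τ j)) := by
  classical
  -- the order-reversing relabeling Fin (q+p) ≃ Fin (p+q)
  set E : Fin (q + p) ≃ Fin (p + q) :=
    Fin.revPerm.trans (finCongr (Nat.add_comm q p)) with hE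
  have hEmono : ∀ k l : Fin (q + p), k ≤ l → E l ≤ E k := by
    intro k l hkl
    simp only [hE, Equiv.trans_apply, finCongr_apply, Fin.le_def, Fin.coe_cast,
      Fin.revPerm_apply, Fin.val_rev]
    have := Fin.le_def.mp hkl
    omega
  have hEcast : ∀ i : Fin q, E (Fin.castAdd p i) = Fin.natAdd p (Fin.rev i) := by
    intro i
    ext
    simp only [hE, Equiv.trans_apply, finCongr_apply, Fin.coe_cast, Fin.revPerm_apply,
      Fin.val_rev, Fin.coe_castAdd, Fin.coe_natAdd]
    have := i.isLt
    omega
  set ν' : Fin (q + p) → ℝ := fun k => -ν (E k) with hν'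
  set t' : Fin (q + p) → ℝ := fun k => -t (E k) with ht'
  have hν'anti : Antitone ν' := by
    intro k l hkl
    simp only [hν', neg_le_neg_iff]
    exact hν (hEmono k l hkl)
  -- transfer of ht
  have hM : IsLinearMap ℝ (fun x : Fin (p + q) → ℝ => (fun k => -x (E k) : Fin (q + p) → ℝ)) := by
    constructor
    · intro a b; funext k; simp [neg_add]; ring
    · intro r a; funext k; simp [smul_eq_mul]
  have ht2 : t' ∈ convexHull ℝ
      (Set.range fun σ : Perm (Fin (q + p)) => fun k => ν' (σ k)) := by
    have himg := hM.image_convexHull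
      (Set.range fun σ : Perm (Fin (p + q)) => fun k => ν (σ k))
    have hmem : t' ∈ (fun x : Fin (p + q) → ℝ => (fun k => -x (E k) : Fin (q + p) → ℝ)) ''
        (convexHull ℝ (Set.range fun σ : Perm (Fin (p + q)) => fun k => ν (σ k))) :=
      ⟨t, ht, rfl⟩
    rw [himg] at hmem
    refine convexHull_mono ?_ hmem
    rintro _ ⟨_, ⟨σ, rfl⟩, rfl⟩
    refine ⟨E.trans (σ.trans E.symm), ?_⟩
    funext k
    simp [hν']
  -- transfer of htq
  have hm : IsLinearMap ℝ (fun x : Fin q → ℝ => (fun i => -x (Fin.rev i) : Fin q → ℝ)) := by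
    constructor
    · intro a b; funext k; simp [neg_add]; ring
    · intro r a; funext k; simp [smul_eq_mul]
  have htq2 : (fun i : Fin q => ν' (Fin.castAdd p i)) ∈ convexHull ℝ
      (Set.range fun σ : Perm (Fin q) => fun i => t' (Fin.castAdd p (σ i))) := by
    have himg := hm.image_convexHull
      (Set.range fun σ : Perm (Fin q) => fun j => t (Fin.natAdd p (σ j)))
    have hmem : (fun i : Fin q => ν' (Fin.castAdd p i)) ∈
        (fun x : Fin q → ℝ => (fun i => -x (Fin.rev i) : Fin q → ℝ)) ''
        (convexHull ℝ (Set.range fun σ : Perm (Fin q) => fun j => t (Fin.natAdd p (σ j)))) := by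
      refine ⟨_, htq, ?_⟩
      funext i
      simp [hν', hEcast i]
    rw [himg] at hmem
    refine convexHull_mono ?_ hmem
    rintro _ ⟨_, ⟨σ, rfl⟩, rfl⟩
    refine ⟨Fin.revPerm.trans (σ.trans Fin.revPerm), ?_⟩
    funext i
    simp [ht', hEcast]
  obtain ⟨σ', hσ'⟩ := main_p q p ν' hν'anti t' ht2 htq2
  refine ⟨Fin.revPerm.trans (σ'.trans Fin.revPerm), fun j => ?_⟩
  have := hσ' (Fin.rev j)
  simp only [ht', hν', hEcast, Fin.rev_rev, neg_inj] at this
  simpa using this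



/-- Let `ν ∈ ℤ^{p+q}` be weakly decreasing and `t ∈ ℝ^p × ℝ^q`.  If `t` lies in the
convex hull of the `S_{p+q}`-orbit of `ν`, while `ν^{(p)}` lies in the convex hull of the
`S_p`-orbit of `t^{(p)}` and `ν^{(q)}` lies in the convex hull of the `S_q`-orbit of
`t^{(q)}`, then `t^{(p)}` is a permutation of `ν^{(p)}` and `t^{(q)}` is a permutation
of `ν^{(q)}`. -/
theorem convex_hull_permutation (p q : ℕ) (ν : Fin (p + q) → ℤ)
    (hν : ∀ i j : Fin (p + q), i ≤ j → ν j ≤ ν i)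
    (t : Fin (p + q) → ℝ)
    (ht : t ∈ convexHull ℝ
      (Set.range fun σ : Equiv.Perm (Fin (p + q)) => fun k => (ν (σ k) : ℝ)))
    (htp : (fun i : Fin p => (ν (Fin.castAdd q i) : ℝ)) ∈ convexHull ℝ
      (Set.range fun σ : Equiv.Perm (Fin p) => fun i => t (Fin.castAdd q (σ i))))
    (htq : (fun j : Fin q => (ν (Fin.natAdd p j) : ℝ)) ∈ convexHull ℝ
      (Set.range fun σ : Equiv.Perm (Fin q) => fun j => t (Fin.natAdd p (σ j)))) :
    (∃ σ : Equiv.Perm (Fin p), ∀ i : Fin p,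
        t (Fin.castAdd q i) = (ν (Fin.castAdd q (σ i)) : ℝ)) ∧
    (∃ τ : Equiv.Perm (Fin q), ∀ j : Fin q,
        t (Fin.natAdd p j) = (ν (Fin.natAdd p (τ j)) : ℝ)) := by

  have hanti : Antitone (fun k => (ν k : ℝ)) := by
    intro i j hij
    simp only []
    exact_mod_cast hν i j hij
  exact ⟨main_p p q (fun k => (ν k : ℝ)) hanti t ht htp,
    main_q p q (fun k => (ν k : ℝ)) hanti t ht htq⟩
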